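/- Let G be a finite connected simple graph and let B be the vertex set of a cycle in G, i.e., B = {b₁,…,b_k} with k ≥ 3 distinct vertices such that b₁b₂, b₂b₃, …, b_{k−1}b_k, b_kb₁ are all edges of G. Then the number of spanning B-forests of G is strictly less than the number of spanning trees of G: F_B(G) < T(G). -/

import Mathlib

open SimpleGraph

/-- The edge set `s ⊆ E(G)` spans a tree: the graph on `V` with edge set `s` is
connected and acyclic. -/
def IsSpanningTreeEdgeSet {V : Type*} (G : SimpleGraph V) (s : Set (Sym2 V)) : Prop :=
  s ⊆ G.edgeSet ∧ (SimpleGraph.fromEdgeSet s).Connected ∧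
    (SimpleGraph.fromEdgeSet s).IsAcyclic

/-- The edge set `s ⊆ E(G)` spans a `B`-forest: the graph on `V` with edge set `s` is a
forest with exactly `|B|` connected components, each of which contains exactly one
vertex of `B`. -/
def IsSpanningBForestEdgeSet {V : Type*} (G : SimpleGraph V) (B : Set V)
    (s : Set (Sym2 V)) : Prop :=
  s ⊆ G.edgeSet ∧ (SimpleGraph.fromEdgeSet s).IsAcyclic ∧
    Nat.card (SimpleGraph.fromEdgeSet s).ConnectedComponent = B.ncard ∧
    ∀ c : (SimpleGraph.fromEdgeSet s).ConnectedComponent,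
      ∃! v, v ∈ B ∧ (SimpleGraph.fromEdgeSet s).connectedComponentMk v = c

section Aux

variable {V : Type*}

lemma reach_sup_edge {H : SimpleGraph V} {u v : V} (hne : u ≠ v) {a c : V} :
    (H ⊔ edge u v).Reachable a c ↔
      H.Reachable a c ∨ (H.Reachable a u ∧ H.Reachable v c) ∨
        (H.Reachable a v ∧ H.Reachable u c) := by
  constructor
  · rintro ⟨w⟩
    induction w with
    | nil => exact Or.inl (Reachable.refl _)
    | @cons p q r h w ih =>
      rcases h with h | h
      · rcases ih with h1 | ⟨h1, h2⟩ | ⟨h1, h2⟩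
        · exact Or.inl (h.reachable.trans h1)
        · exact Or.inr (Or.inl ⟨h.reachable.trans h1, h2⟩)
        · exact Or.inr (Or.inr ⟨h.reachable.trans h1, h2⟩)
      · rw [edge_adj] at h
        rcases h.1 with ⟨rfl, rfl⟩ | ⟨rfl, rfl⟩
        · rcases ih with h1 | ⟨h1, h2⟩ | ⟨h1, h2⟩
          · exact Or.inr (Or.inl ⟨Reachable.refl _, h1⟩)
          · exact Or.inl (h1.symm.trans h2)
          · exact Or.inl h2
        · rcases ih with h1 | ⟨h1, h2⟩ | ⟨h1, h2⟩
          · exact Or.inr (Or.inr ⟨Reachable.refl _, h1⟩)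
          · exact Or.inl h2
          · exact Or.inl (h1.symm.trans h2)
  · have he : (H ⊔ edge u v).Reachable u v :=
      Adj.reachable (Or.inr (by rw [edge_adj]; exact ⟨Or.inl ⟨rfl, rfl⟩, hne⟩))
    have mono : ∀ {x y : V}, H.Reachable x y → (H ⊔ edge u v).Reachable x y :=
      fun h => h.mono le_sup_left
    rintro (h | ⟨h1, h2⟩ | ⟨h1, h2⟩)
    · exact mono h
    · exact (mono h1).trans (he.trans (mono h2))
    · exact (mono h1).trans (he.symm.trans (mono h2))

lemma sdiff_sup_edge_self_le {H : SimpleGraph V} {u v : V} :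
    (H ⊔ edge u v) \ fromEdgeSet {s(u, v)} ≤ H := by
  intro a b hab
  rw [sdiff_adj] at hab
  rcases hab.1 with h | h
  · exact h
  · exact absurd h hab.2

lemma sdiff_sup_edge_comm {H : SimpleGraph V} {u v : V} {e : Sym2 V} (he : e ≠ s(u, v)) :
    (H ⊔ edge u v) \ fromEdgeSet {e} = (H \ fromEdgeSet {e}) ⊔ edge u v := by
  ext a b
  simp only [sdiff_adj, sup_adj, fromEdgeSet_adj, Set.mem_singleton_iff, edge_adj]
  constructor
  · rintro ⟨h1 | h1, h2⟩
    · exact Or.inl ⟨h1, h2⟩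
    · exact Or.inr h1
  · rintro (⟨h1, h2⟩ | h1)
    · exact ⟨Or.inl h1, h2⟩
    · refine ⟨Or.inr h1, ?_⟩
      rintro ⟨h2, -⟩
      rcases h1.1 with ⟨rfl, rfl⟩ | ⟨rfl, rfl⟩
      · exact he h2.symm
      · exact he (h2.symm.trans Sym2.eq_swap)

lemma acyclic_sup_edge {H : SimpleGraph V} {u v : V} (hne : u ≠ v)
    (hr : ¬H.Reachable u v) (ha : H.IsAcyclic) : (H ⊔ edge u v).IsAcyclic := by
  rw [isAcyclic_iff_forall_adj_isBridge] at ha ⊢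
  intro x y hxy
  rw [isBridge_iff]
  by_cases hexy : s(x, y) = s(u, v)
  · rw [hexy]
    intro hre
    have hxyH : H.Reachable x y := hre.mono sdiff_sup_edge_self_le
    rw [Sym2.eq_iff] at hexy
    rcases hexy with ⟨rfl, rfl⟩ | ⟨rfl, rfl⟩
    · exact hr hxyH
    · exact hr hxyH.symm
  · rcases hxy with hxy | hxy
    · have hb := ha hxy
      rw [deleteEdges, sdiff_sup_edge_comm hexy, reach_sup_edge hne]
      have hle : H \ fromEdgeSet {s(x, y)} ≤ H := fun _ _ h => h.1
      rintro (h | ⟨h1, h2⟩ | ⟨h1, h2⟩)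
      · exact hb h
      · exact hr (((h1.mono hle).symm.trans hxy.reachable).trans (h2.mono hle).symm)
      · exact hr (((h2.mono hle).trans hxy.reachable.symm).trans (h1.mono hle))
    · rw [edge_adj] at hxy
      rcases hxy.1 with ⟨rfl, rfl⟩ | ⟨rfl, rfl⟩
      · exact absurd rfl hexy
      · exact absurd Sym2.eq_swap hexy


lemma edge_isAcyclic {u v : V} (hne : u ≠ v) : (edge u v).IsAcyclic := by
  intro x w hw
  have h1 : w.edges.Nodup := hw.edges_nodup
  have h2 : ∀ e ∈ w.edges, e = s(u, v) := fun e he => by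
    have := w.edges_subset_edgeSet he
    rwa [edge_edgeSet_of_ne hne, Set.mem_singleton_iff] at this
  have hlen : 3 ≤ w.edges.length := by
    rw [SimpleGraph.Walk.length_edges]; exact hw.three_le_length
  generalize hE : w.edges = L at h1 h2 hlen
  rcases L with - | ⟨e0, - | ⟨e1, l⟩⟩
  · simp at hlen
  · simp at hlen
  · have he0 := h2 e0 (by simp)
    have he1 := h2 e1 (by simp)
    rw [List.nodup_cons] at h1
    apply h1.1
    rw [he0, ← he1]
    exact List.mem_cons_self

lemma exists_adj_not_reachable {G K : SimpleGraph V} : ∀ {a c : V}, G.Walk a c →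
    ¬K.Reachable a c → ∃ x y, G.Adj x y ∧ ¬K.Reachable x y := by
  intro a c w
  induction w with
  | nil => exact fun h => absurd (Reachable.refl _) h
  | @cons p q r hadj w ih =>
    intro h
    by_cases hk : K.Reachable p q
    · exact ih fun hqr => h (hk.trans hqr)
    · exact ⟨p, q, hadj, hk⟩

lemma exists_spanning_tree_with_edge [Finite V] {G : SimpleGraph V} (hconn : G.Connected)
    {u v : V} (huv : G.Adj u v) :
    ∃ H : SimpleGraph V, H ≤ G ∧ H.IsAcyclic ∧ H.Connected ∧ H.Adj u v := by
  classical
  have hne := huv.ne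
  have hFinG : Finite (SimpleGraph V) :=
    Finite.of_injective (fun H => H.Adj) (fun _ _ h => SimpleGraph.ext h)

  set S : Set (SimpleGraph V) := {H | edge u v ≤ H ∧ H ≤ G ∧ H.IsAcyclic} with hS
  have hedge_le : edge u v ≤ G := by
    intro a b hab
    rw [edge_adj] at hab
    rcases hab.1 with ⟨rfl, rfl⟩ | ⟨rfl, rfl⟩
    · exact huv
    · exact huv.symm
  have hSne : S.Nonempty := ⟨edge u v, le_refl _, hedge_le, edge_isAcyclic hne⟩
  obtain ⟨H, hHS, hmax⟩ := Set.exists_max_image S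
    (fun H : SimpleGraph V => H.edgeSet.ncard) (Set.toFinite S) hSne
  obtain ⟨hHe, hHG, hHa⟩ := hHS
  have hHadj : H.Adj u v := hHe (by rw [edge_adj]; exact ⟨Or.inl ⟨rfl, rfl⟩, hne⟩)
  have hnV : Nonempty V := hconn.nonempty
  refine ⟨H, hHG, hHa, ⟨?_⟩, hHadj⟩
  intro x y
  by_contra hxy
  obtain ⟨w⟩ := hconn.preconnected x y
  obtain ⟨p, q, hpq, hnr⟩ := exists_adj_not_reachable w hxy
  have hnadj : ¬H.Adj p q := fun h => hnr h.reachable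
  have hmem : H ⊔ edge p q ∈ S := by
    refine ⟨le_trans hHe le_sup_left, sup_le hHG ?_, acyclic_sup_edge hpq.ne hnr hHa⟩
    intro a b hab
    rw [edge_adj] at hab
    rcases hab.1 with ⟨rfl, rfl⟩ | ⟨rfl, rfl⟩
    · exact hpq
    · exact hpq.symm
  have hcard : (H ⊔ edge p q).edgeSet.ncard = H.edgeSet.ncard + 1 := by
    rw [edgeSet_sup, edge_edgeSet_of_ne hpq.ne, Set.union_singleton,
      Set.ncard_insert_of_notMem (by rwa [mem_edgeSet]) (Set.toFinite _)]
  have := hmax (H ⊔ edge p q) hmem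
  rw [hcard] at this
  omega

end Aux

/-- **Lemma 9.** If `B` is the vertex set of a cycle in a finite connected simple graph
`G`, then the number of spanning `B`-forests of `G` is strictly smaller than the number
of spanning trees of `G`. -/
theorem spanning_B_forests_lt_spanning_trees
    {V : Type*} [Fintype V] [DecidableEq V]
    (G : SimpleGraph V) (hconn : G.Connected)
    (k : ℕ) (hk : 3 ≤ k) (b : Fin k → V) (hinj : Function.Injective b)
    (hcycle : ∀ i : Fin k, G.Adj (b i) (b (i + ⟨1, by omega⟩))) :
    {s : Set (Sym2 V) | IsSpanningBForestEdgeSet G (Set.range b) s}.ncard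
      < {s : Set (Sym2 V) | IsSpanningTreeEdgeSet G s}.ncard := by
  classical
  have hk0 : 0 < k := by omega
  set c : ℕ → V := fun i => b ⟨i % k, Nat.mod_lt _ hk0⟩ with hc
  have hc_eq : ∀ (i : ℕ) (h : i < k), c i = b ⟨i, h⟩ := fun i h =>
    congrArg b (Fin.ext (Nat.mod_eq_of_lt h))
  have hcinj : ∀ i i' : ℕ, i < k → i' < k → c i = c i' → i = i' := by
    intro i i' hi hi' h
    rw [hc_eq i hi, hc_eq i' hi'] at h
    have := hinj h
    simpa using congrArg Fin.val this
  have hadjc : ∀ i : ℕ, i + 1 < k → G.Adj (c i) (c (i + 1)) := by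
    intro i h
    have h2 := hcycle ⟨i, by omega⟩
    have h3 : ((⟨i, by omega⟩ : Fin k) + ⟨1, by omega⟩) = ⟨i + 1, h⟩ := by
      apply Fin.ext
      simp only [Fin.add_def]
      exact Nat.mod_eq_of_lt h
    rw [h3] at h2
    rw [hc_eq i (by omega), hc_eq (i + 1) h]
    exact h2
  have hadjlast : G.Adj (c (k - 1)) (c 0) := by
    have h2 := hcycle ⟨k - 1, by omega⟩
    have h3 : ((⟨k - 1, by omega⟩ : Fin k) + ⟨1, by omega⟩) = ⟨0, hk0⟩ := by
      apply Fin.ext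
      simp only [Fin.add_def]
      have : k - 1 + 1 = k := by omega
      rw [this, Nat.mod_self]
    rw [h3] at h2
    rw [hc_eq (k - 1) (by omega), hc_eq 0 hk0]
    exact h2
  set P : ℕ → Set (Sym2 V) := fun j => {e | ∃ i : ℕ, i + 1 ≤ j ∧ e = s(c i, c (i + 1))}
    with hP
  set f : Set (Sym2 V) → Set (Sym2 V) := fun s => s ∪ P (k - 1) with hf
  set Fse := {s : Set (Sym2 V) | IsSpanningBForestEdgeSet G (Set.range b) s} with hFse
  set Tse := {s : Set (Sym2 V) | IsSpanningTreeEdgeSet G s} with hTse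
  have key : ∀ s ∈ Fse, IsSpanningTreeEdgeSet G (f s) ∧ (∀ e ∈ P (k - 1), e ∉ s) ∧
      s(c (k - 1), c 0) ∉ f s := by
    intro s hs
    obtain ⟨hsub, hacy, -, hcomp⟩ := hs
    set F := fromEdgeSet s with hF
    have hci : ∀ i i' : ℕ, i < k → i' < k → F.Reachable (c i) (c i') → i = i' := by
      intro i i' hi hi' hr
      obtain ⟨v, -, huniq⟩ := hcomp (F.connectedComponentMk (c i'))
      have e1 : c i = v := huniq (c i)
        ⟨⟨⟨i % k, Nat.mod_lt _ hk0⟩, rfl⟩, ConnectedComponent.sound hr⟩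
      have e2 : c i' = v := huniq (c i') ⟨⟨⟨i' % k, Nat.mod_lt _ hk0⟩, rfl⟩, rfl⟩
      exact hcinj i i' hi hi' (e1.trans e2.symm)
    have hdisj : ∀ e ∈ P (k - 1), e ∉ s := by
      rintro e ⟨i, hik, rfl⟩ hes
      have hlt : i + 1 < k := by omega
      have hadj : F.Adj (c i) (c (i + 1)) := by
        rw [hF, fromEdgeSet_adj]
        exact ⟨hes, fun h => absurd (hcinj i (i + 1) (by omega) hlt h) (by omega)⟩
      exact absurd (hci i (i + 1) (by omega) hlt hadj.reachable) (by omega)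
    have claim : ∀ j, j < k →
        (fromEdgeSet (s ∪ P j)).IsAcyclic ∧
        ∀ x y : V, (fromEdgeSet (s ∪ P j)).Reachable x y ↔
          (F.Reachable x y ∨ ((∃ i, i ≤ j ∧ F.Reachable x (c i)) ∧
            (∃ i, i ≤ j ∧ F.Reachable y (c i)))) := by
      intro j
      induction j with
      | zero =>
        intro _
        have hP0 : P 0 = ∅ := by
          ext e
          simp only [hP, Set.mem_setOf_eq, Set.mem_empty_iff_false, iff_false]
          rintro ⟨i, hi, -⟩
          omega
        rw [hP0, Set.union_empty, ← hF]
        refine ⟨hacy, fun x y => ⟨Or.inl, ?_⟩⟩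
        rintro (h | ⟨⟨i, hi, hx⟩, ⟨i', hi', hy⟩⟩)
        · exact h
        · interval_cases i
          interval_cases i'
          exact hx.trans hy.symm
      | succ j ih =>
        intro hjk
        obtain ⟨iha, ihr⟩ := ih (by omega)
        have hnej : c j ≠ c (j + 1) := fun h => by
          have := hcinj j (j + 1) (by omega) hjk h; omega
        have hPsucc : s ∪ P (j + 1) = (s ∪ P j) ∪ {s(c j, c (j + 1))} := by
          ext e
          simp only [hP, Set.mem_union, Set.mem_setOf_eq, Set.mem_singleton_iff]
          constructor
          · rintro (h | ⟨i, hi, rfl⟩)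
            · exact Or.inl (Or.inl h)
            · rcases Nat.lt_or_ge (i + 1) (j + 1) with h' | h'
              · exact Or.inl (Or.inr ⟨i, by omega, rfl⟩)
              · have : i = j := by omega
                subst this
                exact Or.inr rfl
          · rintro ((h | ⟨i, hi, rfl⟩) | rfl)
            · exact Or.inl h
            · exact Or.inr ⟨i, by omega, rfl⟩
            · exact Or.inr ⟨j, le_refl _, rfl⟩
        have hEq : fromEdgeSet (s ∪ P (j + 1)) =
            fromEdgeSet (s ∪ P j) ⊔ edge (c j) (c (j + 1)) := by
          rw [hPsucc, fromEdgeSet_union]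
          rfl
        set Fj := fromEdgeSet (s ∪ P j) with hFj
        have hnr : ¬Fj.Reachable (c j) (c (j + 1)) := by
          rw [ihr (c j) (c (j + 1))]
          rintro (h | ⟨-, ⟨i, hi, h⟩⟩)
          · have := hci j (j + 1) (by omega) hjk h; omega
          · have := hci (j + 1) i hjk (by omega) h; omega
        refine ⟨by rw [hEq]; exact acyclic_sup_edge hnej hnr iha, ?_⟩
        intro x y
        rw [hEq, reach_sup_edge hnej]
        have hconv : ∀ (a : V) (m : ℕ), m ≤ j + 1 → Fj.Reachable a (c m) →
            ∃ i, i ≤ j + 1 ∧ F.Reachable a (c i) := by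
          intro a m hm hr
          rw [ihr a (c m)] at hr
          rcases hr with h | ⟨⟨i, hi, h⟩, -⟩
          · exact ⟨m, hm, h⟩
          · exact ⟨i, by omega, h⟩
        have hFtoFj : ∀ {a b' : V}, F.Reachable a b' → Fj.Reachable a b' := by
          intro a b' h
          rw [ihr a b']
          exact Or.inl h
        have hto : ∀ (a : V) (m : ℕ), m ≤ j → F.Reachable a (c m) →
            Fj.Reachable a (c j) := by
          intro a m hm h
          rw [ihr a (c j)]
          exact Or.inr ⟨⟨m, hm, h⟩, ⟨j, le_refl _, Reachable.refl _⟩⟩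
        constructor
        · rintro (h | ⟨h1, h2⟩ | ⟨h1, h2⟩)
          · rw [ihr x y] at h
            rcases h with h | ⟨⟨i, hi, hx⟩, ⟨i', hi', hy⟩⟩
            · exact Or.inl h
            · exact Or.inr ⟨⟨i, by omega, hx⟩, ⟨i', by omega, hy⟩⟩
          · exact Or.inr ⟨hconv x j (by omega) h1, hconv y (j + 1) (le_refl _) h2.symm⟩
          · exact Or.inr ⟨hconv x (j + 1) (le_refl _) h1, hconv y j (by omega) h2.symm⟩
        · rintro (h | ⟨⟨i, hi, hx⟩, ⟨i', hi', hy⟩⟩)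
          · exact Or.inl (hFtoFj h)
          · rcases Nat.lt_or_ge i (j + 1) with hij | hij
            · rcases Nat.lt_or_ge i' (j + 1) with hij' | hij'
              · exact Or.inl ((hto x i (by omega) hx).trans (hto y i' (by omega) hy).symm)
              · have : i' = j + 1 := by omega
                subst this
                exact Or.inr (Or.inl ⟨hto x i (by omega) hx, (hFtoFj hy).symm⟩)
            · have : i = j + 1 := by omega
              subst this
              rcases Nat.lt_or_ge i' (j + 1) with hij' | hij'
              · exact Or.inr (Or.inr ⟨hFtoFj hx, (hto y i' (by omega) hy).symm⟩)
              · have : i' = j + 1 := by omega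
                subst this
                exact Or.inl ((hFtoFj hx).trans (hFtoFj hy).symm)
    obtain ⟨hacyK, hreachK⟩ := claim (k - 1) (by omega)
    have hsur : ∀ x : V, ∃ i, i ≤ k - 1 ∧ F.Reachable x (c i) := by
      intro x
      obtain ⟨v, ⟨⟨i0, rfl⟩, hmk⟩, -⟩ := hcomp (F.connectedComponentMk x)
      have hi0 := i0.isLt
      refine ⟨i0.val, by omega, ?_⟩
      rw [hc_eq i0.val i0.isLt, Fin.eta]
      exact (ConnectedComponent.eq.mp hmk).symm
    have hconnK : (fromEdgeSet (s ∪ P (k - 1))).Connected := by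
      have hnV : Nonempty V := hconn.nonempty
      refine ⟨fun x y => ?_⟩
      rw [hreachK x y]
      obtain ⟨i, hi, hx⟩ := hsur x
      obtain ⟨i', hi', hy⟩ := hsur y
      exact Or.inr ⟨⟨i, hi, hx⟩, ⟨i', hi', hy⟩⟩
    have hsubK : s ∪ P (k - 1) ⊆ G.edgeSet := by
      rintro e (he | ⟨i, hi, rfl⟩)
      · exact hsub he
      · rw [mem_edgeSet]
        exact hadjc i (by omega)
    have hstar : s(c (k - 1), c 0) ∉ f s := by
      rintro (h | ⟨i, hi, he⟩)
      · have hne : c (k - 1) ≠ c 0 := fun h' => by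
          have := hcinj (k - 1) 0 (by omega) (by omega) h'; omega
        have hadj : F.Adj (c (k - 1)) (c 0) := by
          rw [hF, fromEdgeSet_adj]
          exact ⟨h, hne⟩
        have := hci (k - 1) 0 (by omega) (by omega) hadj.reachable
        omega
      · rw [Sym2.eq_iff] at he
        rcases he with ⟨h1, h2⟩ | ⟨h1, h2⟩
        · have := hcinj (k - 1) i (by omega) (by omega) h1
          omega
        · have h3 := hcinj (k - 1) (i + 1) (by omega) (by omega) h1
          have h4 := hcinj 0 i (by omega) (by omega) h2
          omega
    exact ⟨⟨hsubK, hconnK, hacyK⟩, hdisj, hstar⟩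
  have hinjOn : Set.InjOn f Fse := by
    intro s1 h1 s2 h2 he
    obtain ⟨-, hd1, -⟩ := key s1 h1
    obtain ⟨-, hd2, -⟩ := key s2 h2
    ext e
    constructor
    · intro hes
      have hm : e ∈ f s1 := Or.inl hes
      rw [he] at hm
      rcases hm with h | h
      · exact h
      · exact absurd hes (hd1 e h)
    · intro hes
      have hm : e ∈ f s2 := Or.inl hes
      rw [← he] at hm
      rcases hm with h | h
      · exact h
      · exact absurd hes (hd2 e h)
  obtain ⟨H, hHG, hHa, hHc, hHadj⟩ := exists_spanning_tree_with_edge hconn hadjlast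
  have hT0 : H.edgeSet ∈ Tse := by
    refine ⟨edgeSet_subset_edgeSet.mpr hHG, ?_, ?_⟩ <;> rw [fromEdgeSet_edgeSet] <;>
      assumption
  have hT0n : H.edgeSet ∉ f '' Fse := by
    rintro ⟨s, hsF, hfs⟩
    obtain ⟨-, -, hstar⟩ := key s hsF
    apply hstar
    rw [hfs]
    exact (H.mem_edgeSet).mpr hHadj
  have himg : f '' Fse ⊆ Tse := by
    rintro - ⟨s, hsF, rfl⟩
    exact (key s hsF).1
  have hss : f '' Fse ⊂ Tse := ⟨himg, fun h => hT0n (h hT0)⟩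
  calc Fse.ncard = (f '' Fse).ncard := (Set.ncard_image_of_injOn hinjOn).symm
    _ < Tse.ncard := Set.ncard_lt_ncard hss (Set.toFinite _)
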